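/- arXiv:2002.10726 — 7 statements merged into one kernel-verified Lean document; each statement's English description precedes it below -/
import Mathlib

section
/- For twice differentiable functions F, φ : ℝ^d → ℝ with φ convex, if σ·D_φ(x,y) ≤ D_F(x,y) ≤ L·D_φ(x,y) for all x, y, then σ∇²φ(x) ⪯ ∇²F(x) ⪯ L∇²φ(x) for all x. -/
open Filter Set

lemma key {d : ℕ} (g : EuclideanSpace ℝ (Fin d) → ℝ) (hg : ContDiff ℝ 2 g)
    (h : ∀ x y, 0 ≤ g x - g y - fderiv ℝ g y (x - y)) :
    ∀ x v, 0 ≤ fderiv ℝ (fun y => fderiv ℝ g y) x v v := by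
  intro x v
  set G : EuclideanSpace ℝ (Fin d) → (EuclideanSpace ℝ (Fin d) →L[ℝ] ℝ) :=
    fun y => fderiv ℝ g y with hGdef
  have hG : ContDiff ℝ 1 G := hg.fderiv_right (by norm_num)
  -- the line t ↦ x + t • v
  have hline : ∀ t : ℝ, HasDerivAt (fun t : ℝ => x + t • v) v t := by
    intro t
    simpa using ((hasDerivAt_id t).smul_const v).const_add x
  -- q t = G (x + t • v) v
  set q : ℝ → ℝ := fun t => G (x + t • v) v with hqdef
  have hq : HasDerivAt q (fderiv ℝ G x v v) 0 := by
    have h1 : HasDerivAt (fun t : ℝ => G (x + t • v)) (fderiv ℝ G x v) 0 := by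
      have hfd : HasFDerivAt G (fderiv ℝ G x) (x + (0:ℝ) • v) := by
        simpa using (hG.differentiable one_ne_zero x).hasFDerivAt
      exact hfd.comp_hasDerivAt 0 (hline 0)
    have := h1.clm_apply (hasDerivAt_const 0 v)
    simpa using this
  -- slope nonneg on the right
  have hslope : ∀ t : ℝ, 0 < t → 0 ≤ q t - q 0 := by
    intro t ht
    have h1 := h (x + t • v) x
    have h2 := h x (x + t • v)
    have e1 : (x + t • v) - x = t • v := by abel
    have e2 : x - (x + t • v) = -(t • v) := by abel
    rw [e1] at h1; rw [e2] at h2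
    have hsum : 0 ≤ G (x + t • v) (t • v) - G x (t • v) := by
      have := add_nonneg h1 h2
      simp only [map_neg] at this
      linarith
    have : 0 ≤ t * (q t - q 0) := by
      simpa [hqdef, map_smul, smul_eq_mul, mul_sub] using hsum
    nlinarith
  have hq' : HasDerivWithinAt q (fderiv ℝ G x v v) (Ioi 0) 0 := hq.hasDerivWithinAt
  have htend := hasDerivWithinAt_iff_tendsto_slope.mp hq'
  have hIoi : (Ioi (0:ℝ)) \ {0} = Ioi 0 := Set.diff_singleton_eq_self (by simp)
  rw [hIoi] at htend
  refine ge_of_tendsto htend ?_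
  filter_upwards [self_mem_nhdsWithin] with t ht
  have ht' : (0:ℝ) < t := ht
  rw [slope_def_field]
  exact div_nonneg (hslope t ht') (by linarith)

/-- If `σ D_φ(x,y) ≤ D_F(x,y) ≤ L D_φ(x,y)` for all `x, y`, then
`σ ∇²φ(x) ⪯ ∇²F(x) ⪯ L ∇²φ(x)` for all `x` (as quadratic forms). -/
theorem stmt1 {d : ℕ} (φ F : EuclideanSpace ℝ (Fin d) → ℝ) (σ L : ℝ)
    (hσ : 0 ≤ σ) (hL : 0 ≤ L)
    (hφ : ContDiff ℝ 2 φ) (hF : ContDiff ℝ 2 F)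
    (hconv : ConvexOn ℝ Set.univ φ)
    (hdiv : ∀ x y,
      σ * (φ x - φ y - fderiv ℝ φ y (x - y)) ≤ F x - F y - fderiv ℝ F y (x - y) ∧
      F x - F y - fderiv ℝ F y (x - y) ≤ L * (φ x - φ y - fderiv ℝ φ y (x - y))) :
    ∀ x v,
      σ * fderiv ℝ (fun y => fderiv ℝ φ y) x v v ≤ fderiv ℝ (fun y => fderiv ℝ F y) x v v ∧
      fderiv ℝ (fun y => fderiv ℝ F y) x v v ≤ L * fderiv ℝ (fun y => fderiv ℝ φ y) x v v := by
  intro x v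
  have hφd : Differentiable ℝ φ := hφ.differentiable (by norm_num)
  have hFd : Differentiable ℝ F := hF.differentiable (by norm_num)
  have hφ1 : ContDiff ℝ 1 (fun y => fderiv ℝ φ y) := hφ.fderiv_right (by norm_num)
  have hF1 : ContDiff ℝ 1 (fun y => fderiv ℝ F y) := hF.fderiv_right (by norm_num)
  -- g₁ = F - σ • φ
  have lem : ∀ c : ℝ, 0 ≤ c →
      (∀ x y, c * (φ x - φ y - fderiv ℝ φ y (x - y)) ≤ F x - F y - fderiv ℝ F y (x - y)) →
      c * fderiv ℝ (fun y => fderiv ℝ φ y) x v v ≤ fderiv ℝ (fun y => fderiv ℝ F y) x v v := by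
    intro c hc hcd
    set g : EuclideanSpace ℝ (Fin d) → ℝ := fun y => F y - c * φ y with hgdef
    have hgc : ContDiff ℝ 2 g := hF.sub (contDiff_const.mul hφ)
    have hgfd : ∀ y, fderiv ℝ g y = fderiv ℝ F y - c • fderiv ℝ φ y := by
      intro y
      rw [hgdef]
      rw [fderiv_fun_sub (hFd y) ((hφd y).const_mul c), fderiv_const_mul (hφd y)]
    have hbreg : ∀ a b, 0 ≤ g a - g b - fderiv ℝ g b (a - b) := by
      intro a b
      have := hcd a b
      rw [hgfd b]
      simp only [hgdef, ContinuousLinearMap.sub_apply, ContinuousLinearMap.smul_apply,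
        smul_eq_mul]
      linarith
    have := key g hgc hbreg x v
    have h2 : fderiv ℝ (fun y => fderiv ℝ g y) x
        = fderiv ℝ (fun y => fderiv ℝ F y) x - c • fderiv ℝ (fun y => fderiv ℝ φ y) x := by
      have hfe : (fun y => fderiv ℝ g y)
          = fun y => fderiv ℝ F y - c • fderiv ℝ φ y := funext hgfd
      rw [hfe, fderiv_fun_sub (hF1.differentiable one_ne_zero x)
        ((hφ1.differentiable one_ne_zero x).fun_const_smul c),
        fderiv_fun_const_smul (hφ1.differentiable one_ne_zero x)]
    rw [h2] at this
    simp only [ContinuousLinearMap.sub_apply, ContinuousLinearMap.smul_apply,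
      ContinuousLinearMap.coe_sub', ContinuousLinearMap.coe_smul', Pi.sub_apply, Pi.smul_apply,
      smul_eq_mul] at this
    linarith
  constructor
  · exact lem σ hσ (fun a b => (hdiv a b).1)
  · -- apply lem with F' = L•φ - (F - ... ) trick: use lem symmetric: consider L φ - F ≥ 0 Bregman
    -- reuse key directly with g = L•φ - F
    set g : EuclideanSpace ℝ (Fin d) → ℝ := fun y => L * φ y - F y with hgdef
    have hgc : ContDiff ℝ 2 g := (contDiff_const.mul hφ).sub hF
    have hgfd : ∀ y, fderiv ℝ g y = L • fderiv ℝ φ y - fderiv ℝ F y := by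
      intro y
      rw [hgdef, fderiv_fun_sub ((hφd y).const_mul L) (hFd y), fderiv_const_mul (hφd y)]
    have hbreg : ∀ a b, 0 ≤ g a - g b - fderiv ℝ g b (a - b) := by
      intro a b
      have := (hdiv a b).2
      rw [hgfd b]
      simp only [hgdef, ContinuousLinearMap.sub_apply, ContinuousLinearMap.smul_apply,
        smul_eq_mul]
      linarith
    have := key g hgc hbreg x v
    have h2 : fderiv ℝ (fun y => fderiv ℝ g y) x
        = L • fderiv ℝ (fun y => fderiv ℝ φ y) x - fderiv ℝ (fun y => fderiv ℝ F y) x := by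
      have hfe : (fun y => fderiv ℝ g y)
          = fun y => L • fderiv ℝ φ y - fderiv ℝ F y := funext hgfd
      rw [hfe, fderiv_fun_sub ((hφ1.differentiable one_ne_zero x).fun_const_smul L)
        (hF1.differentiable one_ne_zero x),
        fderiv_fun_const_smul (hφ1.differentiable one_ne_zero x)]
    rw [h2] at this
    simp only [ContinuousLinearMap.sub_apply, ContinuousLinearMap.smul_apply,
      ContinuousLinearMap.coe_sub', ContinuousLinearMap.coe_smul', Pi.sub_apply, Pi.smul_apply,
      smul_eq_mul] at this
    linarith
end

section
/- Let F, f : ℝ^d → ℝ be twice differentiable with ∇²F(x) ⪰ σ_F I for all x, let μ > 0 satisfy ‖∇²f(x) − ∇²F(x)‖_op ≤ μ for all x, and define φ(x) = f(x) + (μ/2)‖x‖². Then (σ_F/(σ_F + 2μ))·∇²φ(x) ⪯ ∇²F(x) ⪯ ∇²φ(x) for all x. -/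
noncomputable def innSL (d : ℕ) :
    EuclideanSpace ℝ (Fin d) →L[ℝ] EuclideanSpace ℝ (Fin d) →L[ℝ] ℝ := innerSL ℝ

@[simp] lemma innSL_apply {d : ℕ} (y v : EuclideanSpace ℝ (Fin d)) :
    innSL d y v = inner ℝ y v := rfl

/-- If `∇²F(x) ⪰ σ_F I`, `‖∇²f(x) − ∇²F(x)‖_op ≤ μ` for all `x`, and
`φ(x) = f(x) + (μ/2)‖x‖²`, then `(σ_F/(σ_F+2μ)) ∇²φ(x) ⪯ ∇²F(x) ⪯ ∇²φ(x)` for all `x`. -/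
theorem stmt2 {d : ℕ} (F f : EuclideanSpace ℝ (Fin d) → ℝ) (σF μ : ℝ)
    (hσF : 0 < σF) (hμ : 0 < μ)
    (hFsm : ContDiff ℝ 2 F) (hfsm : ContDiff ℝ 2 f)
    (hlower : ∀ x v, σF * ‖v‖ ^ 2 ≤ fderiv ℝ (fun y => fderiv ℝ F y) x v v)
    (hclose : ∀ x,
      ‖fderiv ℝ (fun y => fderiv ℝ f y) x - fderiv ℝ (fun y => fderiv ℝ F y) x‖ ≤ μ)
    (φ : EuclideanSpace ℝ (Fin d) → ℝ)
    (hφ : φ = fun x => f x + (μ / 2) * ‖x‖ ^ 2) :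
    ∀ x v,
      (σF / (σF + 2 * μ)) * fderiv ℝ (fun y => fderiv ℝ φ y) x v v ≤
        fderiv ℝ (fun y => fderiv ℝ F y) x v v ∧
      fderiv ℝ (fun y => fderiv ℝ F y) x v v ≤ fderiv ℝ (fun y => fderiv ℝ φ y) x v v := by
  intro x v
  have hdf : Differentiable ℝ f := hfsm.differentiable (by norm_num)
  have h1 : ∀ y, fderiv ℝ φ y = fderiv ℝ f y + μ • innSL d y := by
    intro y
    have h : HasFDerivAt φ (fderiv ℝ f y + (μ / 2) • (2 • innerSL ℝ y)) y := by
      rw [hφ]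
      exact (hdf y).hasFDerivAt.add
        (((hasStrictFDerivAt_norm_sq y).hasFDerivAt).const_mul (μ / 2))
    rw [h.fderiv]
    congr 1
    ext w
    simp only [ContinuousLinearMap.smul_apply, innSL_apply, innerSL_apply_apply, smul_eq_mul,
      nsmul_eq_mul, Nat.cast_ofNat]
    ring
  have hdf2 : Differentiable ℝ (fun y => fderiv ℝ f y) :=
    (hfsm.fderiv_right (m := 1) (by norm_num)).differentiable (by norm_num)
  have h2 : fderiv ℝ (fun y => fderiv ℝ φ y) x
      = fderiv ℝ (fun y => fderiv ℝ f y) x + μ • innSL d := by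
    have h : HasFDerivAt (fun y => fderiv ℝ φ y)
        (fderiv ℝ (fun y => fderiv ℝ f y) x + μ • innSL d) x := by
      have h' : HasFDerivAt (fun y => fderiv ℝ f y + μ • innSL d y)
          (fderiv ℝ (fun y => fderiv ℝ f y) x + μ • innSL d) x := by
        have := (hdf2 x).hasFDerivAt.add (μ • innSL d).hasFDerivAt
        exact this
      exact h'.congr_of_eventuallyEq (Filter.Eventually.of_forall fun y => (h1 y))
    exact h.fderiv
  have hφvv : fderiv ℝ (fun y => fderiv ℝ φ y) x v v
      = fderiv ℝ (fun y => fderiv ℝ f y) x v v + μ * ‖v‖ ^ 2 := by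
    rw [h2]
    simp only [ContinuousLinearMap.add_apply, ContinuousLinearMap.smul_apply, innSL_apply,
      smul_eq_mul]
    rw [real_inner_self_eq_norm_sq]
  set A := fderiv ℝ (fun y => fderiv ℝ F y) x v v with hA
  set B := fderiv ℝ (fun y => fderiv ℝ f y) x v v with hB
  have hbound : |B - A| ≤ μ * ‖v‖ ^ 2 := by
    have h3 := hclose x
    set T := fderiv ℝ (fun y => fderiv ℝ f y) x - fderiv ℝ (fun y => fderiv ℝ F y) x with hT
    have h4 : |T v v| ≤ μ * ‖v‖ ^ 2 := by
      calc |T v v| ≤ ‖T v‖ * ‖v‖ := (T v).le_opNorm v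
        _ ≤ (‖T‖ * ‖v‖) * ‖v‖ := by gcongr; exact T.le_opNorm v
        _ ≤ (μ * ‖v‖) * ‖v‖ := by gcongr
        _ = μ * ‖v‖ ^ 2 := by ring
    simpa [hT, hA, hB] using h4
  have hAlow := hlower x v
  rw [hφvv]
  have habs := abs_le.mp hbound
  constructor
  · rw [div_mul_eq_mul_div, div_le_iff₀ (by linarith)]
    nlinarith [sq_nonneg ‖v‖]
  · linarith [habs.1]
end

section
/- Suppose φ : ℝ^d → ℝ is twice continuously differentiable with σ I ⪯ ∇²φ(x) ⪯ L I for all x, with 0 < σ ≤ L. Let x_{t+1} − y_t = α(v_{t+1} − w_t) where w_t = (1−β)v_t + β y_t with β ∈ [0,1] and α ∈ ℝ. Then D_φ(x_{t+1}, y_t) ≤ α²·(L/σ)·((1−β)·D_φ(v_{t+1}, v_t) + β·D_φ(v_{t+1}, y_t)). -/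
open scoped RealInnerProductSpace

/-- Bregman divergence `D_φ(x,y) = φ(x) − φ(y) − ⟨∇φ(y), x−y⟩`. -/
noncomputable def bregman {d : ℕ} (φ : EuclideanSpace ℝ (Fin d) → ℝ)
    (x y : EuclideanSpace ℝ (Fin d)) : ℝ :=
  φ x - φ y - ⟪gradient φ y, x - y⟫


/-- Abstract 1-D second-order upper bound. -/
lemma taylor_upper (g g1 h : ℝ → ℝ) (C : ℝ)
    (hg : ∀ t, HasDerivAt g (g1 t) t)
    (hg1 : ∀ t, HasDerivAt g1 (h t) t)
    (hC : ∀ t, h t ≤ C) :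
    g 1 - g 0 - g1 0 ≤ C / 2 := by
  set G : ℝ → ℝ := fun t => g1 t - g1 0 - C * t with hG
  have hGd : ∀ t : ℝ, HasDerivAt G (h t - C) t := fun t => by
    have := ((hg1 t).sub_const (g1 0)).sub ((hasDerivAt_id t).const_mul C)
    simp only [mul_one] at this
    exact this
  have hGanti : AntitoneOn G (Set.Icc 0 1) := by
    apply antitoneOn_of_deriv_nonpos (convex_Icc 0 1)
      (fun t _ => ((hGd t).continuousAt).continuousWithinAt)
      (fun t _ => ((hGd t).differentiableAt).differentiableWithinAt)
    intro t _
    rw [(hGd t).deriv]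
    linarith [hC t]
  set F : ℝ → ℝ := fun t => g t - g 0 - g1 0 * t - C / 2 * t ^ 2 with hF
  have hFd : ∀ t : ℝ, HasDerivAt F (G t) t := by
    intro t
    have h1 : HasDerivAt F (g1 t - (g1 0 * 1) - C / 2 * (2 * t ^ 1)) t :=
      (((hg t).sub_const (g 0)).sub ((hasDerivAt_id t).const_mul (g1 0))).sub
        ((hasDerivAt_pow 2 t).const_mul (C / 2))
    convert h1 using 1
    simp [hG]; ring
  have hFanti : AntitoneOn F (Set.Icc 0 1) := by
    apply antitoneOn_of_deriv_nonpos (convex_Icc 0 1)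
      (fun t _ => ((hFd t).continuousAt).continuousWithinAt)
      (fun t _ => ((hFd t).differentiableAt).differentiableWithinAt)
    intro t ht
    rw [(hFd t).deriv]
    rw [interior_Icc] at ht
    have := hGanti (Set.left_mem_Icc.2 zero_le_one)
      (Set.mem_Icc.2 ⟨le_of_lt ht.1, le_of_lt ht.2⟩) (le_of_lt ht.1)
    simpa [hG] using this
  have := hFanti (Set.left_mem_Icc.2 zero_le_one) (Set.right_mem_Icc.2 zero_le_one) zero_le_one
  simp [hF] at this
  linarith

lemma breg_bounds {d : ℕ} (φ : EuclideanSpace ℝ (Fin d) → ℝ) (σ L : ℝ)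
    (hφ : ContDiff ℝ 2 φ)
    (hess : ∀ x v, σ * ‖v‖ ^ 2 ≤ fderiv ℝ (fun y => fderiv ℝ φ y) x v v ∧
      fderiv ℝ (fun y => fderiv ℝ φ y) x v v ≤ L * ‖v‖ ^ 2)
    (x y : EuclideanSpace ℝ (Fin d)) :
    σ / 2 * ‖x - y‖ ^ 2 ≤ (φ x - φ y - ⟪gradient φ y, x - y⟫) ∧
      (φ x - φ y - ⟪gradient φ y, x - y⟫) ≤ L / 2 * ‖x - y‖ ^ 2 := by
  have hφ1 : Differentiable ℝ φ := hφ.differentiable (by norm_num)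
  have hφ2 : ContDiff ℝ 1 (fderiv ℝ φ) := hφ.fderiv_right (by norm_num)
  have hφ2d : Differentiable ℝ (fderiv ℝ φ) := hφ2.differentiable (by norm_num)
  set u := x - y with hu
  have hgrad : ⟪gradient φ y, u⟫ = fderiv ℝ φ y u := by
    rw [gradient]; exact InnerProductSpace.toDual_symm_apply
  set l : ℝ → EuclideanSpace ℝ (Fin d) := fun t => y + t • u with hl
  have hld : ∀ t : ℝ, HasDerivAt l u t := fun t => by
    have := ((hasDerivAt_id t).smul_const u).const_add y
    simp only [one_smul] at this
    exact this
  set g : ℝ → ℝ := fun t => φ (l t) with hg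
  set g1 : ℝ → ℝ := fun t => fderiv ℝ φ (l t) u with hg1
  have hgd : ∀ t : ℝ, HasDerivAt g (g1 t) t := fun t =>
    (hφ1 (l t)).hasFDerivAt.comp_hasDerivAt t (hld t)
  have hg1d : ∀ t : ℝ, HasDerivAt g1 (fderiv ℝ (fderiv ℝ φ) (l t) u u) t := fun t => by
    have h1 : HasDerivAt (fun s => fderiv ℝ φ (l s)) (fderiv ℝ (fderiv ℝ φ) (l t) u) t :=
      (hφ2d (l t)).hasFDerivAt.comp_hasDerivAt t (hld t)
    simpa using h1.clm_apply (hasDerivAt_const t u)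
  have hg10 : g 1 = φ x := by simp [hg, hl, hu]
  have hg00 : g 0 = φ y := by simp [hg, hl]
  have hg1z : g1 0 = fderiv ℝ φ y u := by simp [hg1, hl]
  constructor
  · have := taylor_upper (fun t => -g t) (fun t => -g1 t)
      (fun t => -(fderiv ℝ (fderiv ℝ φ) (l t) u u)) (-(σ * ‖u‖ ^ 2))
      (fun t => (hgd t).neg) (fun t => (hg1d t).neg)
      (fun t => by simpa using (hess (l t) u).1)
    have h2 : -(g 1) - -(g 0) - -(g1 0) ≤ -(σ * ‖u‖^2) / 2 := this
    rw [hg10, hg00, hg1z] at h2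
    rw [hgrad]
    linarith
  · have := taylor_upper g g1 (fun t => fderiv ℝ (fderiv ℝ φ) (l t) u u) (L * ‖u‖ ^ 2)
      (fun t => hgd t) (fun t => hg1d t) (fun t => (hess (l t) u).2)
    rw [hg10, hg00, hg1z] at this
    rw [hgrad]
    linarith


theorem stmt3' {d : ℕ} (φ : EuclideanSpace ℝ (Fin d) → ℝ) (σ L : ℝ)
    (hσ : 0 < σ) (hσL : σ ≤ L)
    (hφ : ContDiff ℝ 2 φ)
    (hess : ∀ x v, σ * ‖v‖ ^ 2 ≤ fderiv ℝ (fun y => fderiv ℝ φ y) x v v ∧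
      fderiv ℝ (fun y => fderiv ℝ φ y) x v v ≤ L * ‖v‖ ^ 2)
    (α β : ℝ) (hβ : β ∈ Set.Icc (0 : ℝ) 1)
    (xnext y v vnext w : EuclideanSpace ℝ (Fin d))
    (hw : w = (1 - β) • v + β • y)
    (hx : xnext - y = α • (vnext - w))
    (hbd : ∀ x y : EuclideanSpace ℝ (Fin d),
      σ / 2 * ‖x - y‖ ^ 2 ≤ (φ x - φ y - ⟪gradient φ y, x - y⟫) ∧
      (φ x - φ y - ⟪gradient φ y, x - y⟫) ≤ L / 2 * ‖x - y‖ ^ 2) :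
    (φ xnext - φ y - ⟪gradient φ y, xnext - y⟫) ≤
      α ^ 2 * (L / σ) * ((1 - β) * (φ vnext - φ v - ⟪gradient φ v, vnext - v⟫)
        + β * (φ vnext - φ y - ⟪gradient φ y, vnext - y⟫)) := by
  obtain ⟨hβ0, hβ1⟩ := hβ
  set p := vnext - v
  set q := vnext - y
  have hsplit : vnext - w = (1 - β) • p + β • q := by
    rw [hw]; simp only [p, q]; module
  have hnorm : ‖xnext - y‖ ^ 2 = α ^ 2 * ‖(1 - β) • p + β • q‖ ^ 2 := by
    rw [hx, hsplit, norm_smul]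
    simp [mul_pow, sq_abs]
  have hconv : ‖(1 - β) • p + β • q‖ ^ 2 ≤ (1 - β) * ‖p‖ ^ 2 + β * ‖q‖ ^ 2 := by
    have e1 : ‖(1 - β) • p + β • q‖ ^ 2 =
        (1 - β) ^ 2 * ‖p‖ ^ 2 + 2 * ((1 - β) * β * ⟪p, q⟫) + β ^ 2 * ‖q‖ ^ 2 := by
      rw [@norm_add_sq_real, norm_smul, norm_smul, real_inner_smul_left, real_inner_smul_right]
      rw [Real.norm_eq_abs, Real.norm_eq_abs, abs_of_nonneg (by linarith : (0:ℝ) ≤ 1 - β), abs_of_nonneg hβ0]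
      ring
    have e2 : 2 * ⟪p, q⟫ ≤ ‖p‖ ^ 2 + ‖q‖ ^ 2 := by
      have := sq_nonneg (‖p - q‖)
      rw [@norm_sub_sq_real] at this
      linarith
    nlinarith [mul_nonneg (mul_nonneg (by linarith : (0:ℝ) ≤ 1 - β) hβ0)
      (by linarith : (0:ℝ) ≤ ‖p‖ ^ 2 + ‖q‖ ^ 2 - 2 * ⟪p, q⟫)]
  have h1 := (hbd xnext y).2
  have h2 := (hbd vnext v).1
  have h3 := (hbd vnext y).1
  have hL : 0 < L := lt_of_lt_of_le hσ hσL
  rw [hnorm] at h1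
  -- ‖p‖² ≤ 2/σ * D etc
  have := mul_le_mul_of_nonneg_left hconv (by positivity : (0:ℝ) ≤ L / 2 * α ^ 2)
  have hfin : φ xnext - φ y - ⟪gradient φ y, xnext - y⟫ ≤
      L / 2 * α ^ 2 * ((1 - β) * ‖p‖ ^ 2 + β * ‖q‖ ^ 2) := by
    calc φ xnext - φ y - ⟪gradient φ y, xnext - y⟫
        ≤ L / 2 * (α ^ 2 * ‖(1 - β) • p + β • q‖ ^ 2) := h1
      _ = L / 2 * α ^ 2 * ‖(1 - β) • p + β • q‖ ^ 2 := by ring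
      _ ≤ L / 2 * α ^ 2 * ((1 - β) * ‖p‖ ^ 2 + β * ‖q‖ ^ 2) := this
  have hp : ‖p‖ ^ 2 ≤ 2 / σ * (φ vnext - φ v - ⟪gradient φ v, p⟫) := by
    rw [div_mul_eq_mul_div, le_div_iff₀ hσ]
    calc ‖p‖ ^ 2 * σ = 2 * (σ / 2 * ‖p‖ ^ 2) := by ring
      _ ≤ 2 * (φ vnext - φ v - ⟪gradient φ v, p⟫) := by linarith
  have hq : ‖q‖ ^ 2 ≤ 2 / σ * (φ vnext - φ y - ⟪gradient φ y, q⟫) := by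
    rw [div_mul_eq_mul_div, le_div_iff₀ hσ]
    calc ‖q‖ ^ 2 * σ = 2 * (σ / 2 * ‖q‖ ^ 2) := by ring
      _ ≤ 2 * (φ vnext - φ y - ⟪gradient φ y, q⟫) := by linarith
  have key : L / 2 * α ^ 2 * ((1 - β) * ‖p‖ ^ 2 + β * ‖q‖ ^ 2) ≤
      α ^ 2 * (L / σ) * ((1 - β) * (φ vnext - φ v - ⟪gradient φ v, p⟫)
        + β * (φ vnext - φ y - ⟪gradient φ y, q⟫)) := by
    have c1 : (1 - β) * ‖p‖ ^ 2 ≤ (1 - β) * (2 / σ * (φ vnext - φ v - ⟪gradient φ v, p⟫)) :=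
      mul_le_mul_of_nonneg_left hp (by linarith)
    have c2 : β * ‖q‖ ^ 2 ≤ β * (2 / σ * (φ vnext - φ y - ⟪gradient φ y, q⟫)) :=
      mul_le_mul_of_nonneg_left hq hβ0
    have c3 : L / 2 * α ^ 2 * ((1 - β) * (2 / σ * (φ vnext - φ v - ⟪gradient φ v, p⟫))
        + β * (2 / σ * (φ vnext - φ y - ⟪gradient φ y, q⟫))) =
        α ^ 2 * (L / σ) * ((1 - β) * (φ vnext - φ v - ⟪gradient φ v, p⟫)
        + β * (φ vnext - φ y - ⟪gradient φ y, q⟫)) := by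
      field_simp
    calc L / 2 * α ^ 2 * ((1 - β) * ‖p‖ ^ 2 + β * ‖q‖ ^ 2)
        ≤ L / 2 * α ^ 2 * ((1 - β) * (2 / σ * (φ vnext - φ v - ⟪gradient φ v, p⟫))
            + β * (2 / σ * (φ vnext - φ y - ⟪gradient φ y, q⟫))) := by
          apply mul_le_mul_of_nonneg_left (by linarith) (by positivity)
      _ = _ := c3
  linarith

/-- if `σ I ⪯ ∇²φ ⪯ L I` with `0 < σ ≤ L`, and
`x₊ − y = α (v₊ − w)` with `w = (1−β) v + β y`, `β ∈ [0,1]`, then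
`D_φ(x₊, y) ≤ α² (L/σ) ((1−β) D_φ(v₊, v) + β D_φ(v₊, y))`. -/
theorem stmt3 {d : ℕ} (φ : EuclideanSpace ℝ (Fin d) → ℝ) (σ L : ℝ)
    (hσ : 0 < σ) (hσL : σ ≤ L)
    (hφ : ContDiff ℝ 2 φ)
    (hess : ∀ x v, σ * ‖v‖ ^ 2 ≤ fderiv ℝ (fun y => fderiv ℝ φ y) x v v ∧
      fderiv ℝ (fun y => fderiv ℝ φ y) x v v ≤ L * ‖v‖ ^ 2)
    (α β : ℝ) (hβ : β ∈ Set.Icc (0 : ℝ) 1)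
    (xnext y v vnext w : EuclideanSpace ℝ (Fin d))
    (hw : w = (1 - β) • v + β • y)
    (hx : xnext - y = α • (vnext - w)) :
    bregman φ xnext y ≤
      α ^ 2 * (L / σ) * ((1 - β) * bregman φ vnext v + β * bregman φ vnext y) := by
  simp only [bregman]
  exact stmt3' φ σ L hσ hσL hφ hess α β hβ xnext y v vnext w hw hx
    (breg_bounds φ σ L hφ hess)
end

section
/- Let g : ℝ^d → ℝ ∪ {+∞} be a proper convex function, φ twice differentiable and strictly convex, β ∈ [0,1], and let v₊ = argmin_x { g(x) + (1−β)D_φ(x, v) + β D_φ(x, y) }. Then for every x in the domain of g: g(v₊) + (1−β)D_φ(v₊, v) + β D_φ(v₊, y) ≤ g(x) + (1−β)D_φ(x, v) + β D_φ(x, y) − D_φ(x, v₊). -/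
open scoped RealInnerProductSpace

lemma inner_gradient_eq_fderiv {d : ℕ} (φ : EuclideanSpace ℝ (Fin d) → ℝ)
    (p w : EuclideanSpace ℝ (Fin d)) :
    ⟪gradient φ p, w⟫ = fderiv ℝ φ p w := by
  rw [gradient]
  exact InnerProductSpace.toDual_symm_apply

/-- three-point descent property of Bregman proximal points:
if `v₊` minimizes `g(x) + (1−β) D_φ(x,v) + β D_φ(x,y)` over the domain `s` of the
proper convex function `g`, then for every `x ∈ s`,
`g(v₊) + (1−β) D_φ(v₊,v) + β D_φ(v₊,y) ≤ g(x) + (1−β) D_φ(x,v) + β D_φ(x,y) − D_φ(x,v₊)`. -/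
theorem stmt5 {d : ℕ} (g : EuclideanSpace ℝ (Fin d) → ℝ)
    (s : Set (EuclideanSpace ℝ (Fin d))) (hs : s.Nonempty)
    (hg : ConvexOn ℝ s g)
    (φ : EuclideanSpace ℝ (Fin d) → ℝ)
    (hφ : ContDiff ℝ 2 φ) (hφstrict : StrictConvexOn ℝ Set.univ φ)
    (β : ℝ) (hβ : β ∈ Set.Icc (0 : ℝ) 1)
    (v y vplus : EuclideanSpace ℝ (Fin d)) (hvplus : vplus ∈ s)
    (hmin : ∀ x ∈ s,
      g vplus + (1 - β) * bregman φ vplus v + β * bregman φ vplus y ≤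
        g x + (1 - β) * bregman φ x v + β * bregman φ x y) :
    ∀ x ∈ s,
      g vplus + (1 - β) * bregman φ vplus v + β * bregman φ vplus y ≤
        g x + (1 - β) * bregman φ x v + β * bregman φ x y - bregman φ x vplus := by
  intro x hx
  have hφdiff : Differentiable ℝ φ := hφ.differentiable two_ne_zero
  set w := x - vplus with hw
  set A : ℝ := (1 - β) * ⟪gradient φ v, w⟫ + β * ⟪gradient φ y, w⟫ with hA
  -- key claim: g x - g vplus ≥ A - ⟪∇φ vplus, w⟫
  have key : A - ⟪gradient φ vplus, w⟫ ≤ g x - g vplus := by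
    -- the curve
    set c : ℝ → EuclideanSpace ℝ (Fin d) := fun t => vplus + t • w with hc
    have hder : HasDerivAt (fun t => φ (c t)) (fderiv ℝ φ vplus w) 0 := by
      have h1 : HasDerivAt c w 0 := by
        have : HasDerivAt (fun t : ℝ => t • w) ((1 : ℝ) • w) 0 :=
          (hasDerivAt_id (0 : ℝ)).smul_const w
        simpa [hc, one_smul] using this.const_add vplus
      have h2 : HasFDerivAt φ (fderiv ℝ φ (c 0)) (c 0) :=
        (hφdiff (c 0)).hasFDerivAt
      have := h2.comp_hasDerivAt 0 h1
      rw [show c 0 = vplus by simp [hc]] at this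
      exact this
    have hc0 : c 0 = vplus := by simp [hc]
    -- slope inequality on (0,1]
    have hslope : ∀ t ∈ Set.Ioc (0 : ℝ) 1,
        A - (g x - g vplus) ≤ slope (fun t => φ (c t)) 0 t := by
      intro t ht
      obtain ⟨ht0, ht1⟩ := ht
      have heq : (1 - t) • vplus + t • x = c t := by
        simp only [hc, hw, smul_sub]; module
      have hcts : c t ∈ s := by
        have h := hg.1 hvplus hx (show (0:ℝ) ≤ 1 - t by linarith) ht0.le (by ring)
        rwa [heq] at h
      have hmin' := hmin (c t) hcts
      have hgc : g (c t) ≤ (1 - t) * g vplus + t * g x := by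
        have h := hg.2 hvplus hx (show (0:ℝ) ≤ 1 - t by linarith) ht0.le (by ring)
        rw [heq] at h
        simpa [smul_eq_mul] using h
      -- expand bregman terms in hmin'
      have hexp : φ (c t) - φ vplus - t * A + g (c t) - g vplus ≥ 0 := by
        have e1 : bregman φ (c t) v - bregman φ vplus v
            = φ (c t) - φ vplus - ⟪gradient φ v, t • w⟫ := by
          have hin : ⟪gradient φ v, c t - v⟫
              = ⟪gradient φ v, vplus - v⟫ + ⟪gradient φ v, t • w⟫ := by
            rw [← inner_add_right]; congr 1; simp only [hc]; module
          simp only [bregman]; rw [hin]; ring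
        have e2 : bregman φ (c t) y - bregman φ vplus y
            = φ (c t) - φ vplus - ⟪gradient φ y, t • w⟫ := by
          have hin : ⟪gradient φ y, c t - y⟫
              = ⟪gradient φ y, vplus - y⟫ + ⟪gradient φ y, t • w⟫ := by
            rw [← inner_add_right]; congr 1; simp only [hc]; module
          simp only [bregman]; rw [hin]; ring
        have hsum : 0 ≤ g (c t) - g vplus
            + (1 - β) * (bregman φ (c t) v - bregman φ vplus v)
            + β * (bregman φ (c t) y - bregman φ vplus y) := by linarith [hmin']
        rw [e1, e2] at hsum
        rw [real_inner_smul_right, real_inner_smul_right] at hsum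
        have : (1 - β) * (φ (c t) - φ vplus - t * ⟪gradient φ v, w⟫)
            + β * (φ (c t) - φ vplus - t * ⟪gradient φ y, w⟫)
            = φ (c t) - φ vplus - t * A := by rw [hA]; ring
        linarith [hsum, this.symm.le]
      have : t * A - t * (g x - g vplus) ≤ φ (c t) - φ vplus := by
        nlinarith [hgc, hexp]
      rw [slope_def_field, hc0, sub_zero, le_div_iff₀ ht0]
      nlinarith [this]
    -- take the limit t → 0+
    have hlim : Filter.Tendsto (slope (fun t => φ (c t)) 0) (nhdsWithin 0 (Set.Ioi 0))
        (nhds (fderiv ℝ φ vplus w)) := by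
      have := hasDerivAt_iff_tendsto_slope.mp hder
      exact this.mono_left (nhdsWithin_mono 0 (by intro t ht; exact ne_of_gt ht))
    have hbound : A - (g x - g vplus) ≤ fderiv ℝ φ vplus w := by
      refine ge_of_tendsto hlim ?_
      filter_upwards [Ioc_mem_nhdsGT_of_mem (Set.mem_Ico.2 ⟨le_refl 0, one_pos⟩)] with t ht
      exact hslope t ht
    rw [inner_gradient_eq_fderiv]
    linarith
  -- now unfold and conclude
  have e1 : bregman φ x v - bregman φ vplus v
      = φ x - φ vplus - ⟪gradient φ v, w⟫ := by
    simp only [bregman]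
    have hin : ⟪gradient φ v, x - v⟫
        = ⟪gradient φ v, vplus - v⟫ + ⟪gradient φ v, w⟫ := by
      rw [← inner_add_right]; congr 1; rw [hw]; module
    rw [hin]; ring
  have e2 : bregman φ x y - bregman φ vplus y
      = φ x - φ vplus - ⟪gradient φ y, w⟫ := by
    simp only [bregman]
    have hin : ⟪gradient φ y, x - y⟫
        = ⟪gradient φ y, vplus - y⟫ + ⟪gradient φ y, w⟫ := by
      rw [← inner_add_right]; congr 1; rw [hw]; module
    rw [hin]; ring
  have e3 : bregman φ x vplus = φ x - φ vplus - ⟪gradient φ vplus, w⟫ := by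
    simp only [bregman, hw]
  nlinarith [key, e1, e2, e3, hβ.1, hβ.2]
end

section
/- Suppose F is L-smooth relative to φ, i.e., F(x) ≤ F(y) + ⟨∇F(y), x−y⟩ + L·D_φ(x,y) for all x,y, and σ-strongly convex relative to φ, i.e., F(x) ≥ F(y) + ⟨∇F(y), x−y⟩ + σ·D_φ(x,y). If x_* minimizes F + ψ for convex ψ, and x_{t+1} = argmin_x {⟨∇F(x_t), x⟩ + ψ(x) + L·D_φ(x, x_t)}, then F(x_{t+1}) + ψ(x_{t+1}) − F(x_*) − ψ(x_*) ≤ (1 − σ/L)^{t+1} · L · D_φ(x_*, x_0) after iterating from x_0, provided D_φ satisfies the three-point identity and all argmins exist. -/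
open scoped RealInnerProductSpace

open Filter Set Topology

lemma line_hasDerivAt {d : ℕ} (φ : EuclideanSpace ℝ (Fin d) → ℝ)
    (hφ : Differentiable ℝ φ) (p v : EuclideanSpace ℝ (Fin d)) :
    HasDerivAt (fun t : ℝ => φ (p + t • v)) ⟪gradient φ p, v⟫ 0 := by
  have h1 : HasDerivAt (fun t : ℝ => p + t • v) v 0 := by
    simpa using ((hasDerivAt_id (0:ℝ)).smul_const v).const_add p
  have h2 : HasFDerivAt φ (InnerProductSpace.toDual ℝ _ (gradient φ p)) p :=
    (hφ p).hasGradientAt.hasFDerivAt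
  have h2' : HasFDerivAt φ (InnerProductSpace.toDual ℝ _ (gradient φ p)) (p + (0:ℝ) • v) := by
    simpa using h2
  have := h2'.comp_hasDerivAt (0:ℝ) h1
  simpa [InnerProductSpace.toDual_apply_apply, Function.comp_def] using this

lemma slope_tendsto {f : ℝ → ℝ} {g0 : ℝ} (h : HasDerivAt f g0 0) :
    Tendsto (fun l : ℝ => (f l - f 0) / l) (𝓝[>] (0:ℝ)) (𝓝 g0) := by
  have h1 := hasDerivAt_iff_tendsto_slope.mp h
  have h2 : Tendsto (slope f 0) (𝓝[>] (0:ℝ)) (𝓝 g0) :=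
    h1.mono_left (nhdsWithin_mono 0 (fun x hx => ne_of_gt hx))
  refine h2.congr (fun l => ?_)
  simp [slope_def_field]

lemma bregman_nonneg {d : ℕ} {φ : EuclideanSpace ℝ (Fin d) → ℝ}
    (hconv : ConvexOn ℝ Set.univ φ) (hφ : Differentiable ℝ φ)
    (x y : EuclideanSpace ℝ (Fin d)) : 0 ≤ bregman φ x y := by
  have hd := line_hasDerivAt φ hφ y (x - y)
  have hs := slope_tendsto hd
  have hev : ∀ᶠ l in 𝓝[>] (0:ℝ),
      (φ (y + l • (x - y)) - φ (y + (0:ℝ) • (x - y))) / l ≤ φ x - φ y := by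
    filter_upwards [Ioc_mem_nhdsGT_of_mem (Set.mem_Ico.mpr ⟨le_refl (0:ℝ), one_pos⟩)]
      with l hl
    obtain ⟨hl0, hl1⟩ := hl
    have hconvl := hconv.2 (Set.mem_univ y) (Set.mem_univ x)
      (by linarith : (0:ℝ) ≤ 1 - l) hl0.le (by ring)
    have heq : (1 - l) • y + l • x = y + l • (x - y) := by
      rw [sub_smul, smul_sub, one_smul]; abel
    rw [heq, smul_eq_mul, smul_eq_mul] at hconvl
    rw [div_le_iff₀ hl0]
    simp only [zero_smul, add_zero]
    nlinarith [hconvl]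
  have h2 : ⟪gradient φ y, x - y⟫ ≤ φ x - φ y := le_of_tendsto hs hev
  simp only [bregman]
  linarith

lemma three_point {d : ℕ} (φ ψ : EuclideanSpace ℝ (Fin d) → ℝ) (L : ℝ) (hL : 0 < L)
    (hφ : Differentiable ℝ φ) (hψ : ConvexOn ℝ Set.univ ψ)
    (c a p : EuclideanSpace ℝ (Fin d))
    (hmin : ∀ u, ⟪c, p⟫ + ψ p + L * bregman φ p a ≤ ⟪c, u⟫ + ψ u + L * bregman φ u a)
    (u : EuclideanSpace ℝ (Fin d)) :
    ⟪c, p⟫ + ψ p + L * bregman φ p a + L * bregman φ u p ≤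
      ⟪c, u⟫ + ψ u + L * bregman φ u a := by
  set v := u - p with hv
  have hd := line_hasDerivAt φ hφ p v
  have hs : Tendsto (fun l : ℝ => (φ (p + l • v) - φ (p + (0:ℝ) • v)) / l - ⟪gradient φ p, v⟫)
      (𝓝[>] (0:ℝ)) (𝓝 0) := by
    have h := (slope_tendsto hd).sub_const ⟪gradient φ p, v⟫
    rw [sub_self] at h
    exact h
  have key : ∀ᶠ l in 𝓝[>] (0:ℝ),
      ⟪c, p⟫ + ψ p + L * ⟪gradient φ a, v⟫ - L * ⟪gradient φ p, v⟫ - (⟪c, u⟫ + ψ u) ≤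
        L * ((φ (p + l • v) - φ (p + (0:ℝ) • v)) / l - ⟪gradient φ p, v⟫) := by
    filter_upwards [Ioc_mem_nhdsGT_of_mem (Set.mem_Ico.mpr ⟨le_refl (0:ℝ), one_pos⟩)]
      with l hl
    obtain ⟨hl0, hl1⟩ := hl
    have hm := hmin (p + l • v)
    have hψl : ψ (p + l • v) ≤ (1 - l) * ψ p + l * ψ u := by
      have heq : (1 - l) • p + l • u = p + l • v := by
        rw [hv, sub_smul, smul_sub, one_smul]; abel
      have h := hψ.2 (Set.mem_univ p) (Set.mem_univ u)
        (by linarith : (0:ℝ) ≤ 1 - l) hl0.le (by ring)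
      rw [heq, smul_eq_mul, smul_eq_mul] at h
      exact h
    have hip : ⟪c, p + l • v⟫ = ⟪c, p⟫ + l * (⟪c, u⟫ - ⟪c, p⟫) := by
      rw [inner_add_right, real_inner_smul_right, hv, inner_sub_right]
    have hBa : bregman φ (p + l • v) a
        = bregman φ p a + (φ (p + l • v) - φ (p + (0:ℝ) • v)) - l * ⟪gradient φ a, v⟫ := by
      simp only [bregman, zero_smul, add_zero]
      have h5 : p + l • v - a = (p - a) + l • v := by abel
      rw [h5, inner_add_right, real_inner_smul_right]
      ring
    rw [hip, hBa] at hm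
    have hkey : l * (⟪c, p⟫ + ψ p + L * ⟪gradient φ a, v⟫ - (⟪c, u⟫ + ψ u)) ≤
        L * (φ (p + l • v) - φ (p + (0:ℝ) • v)) := by nlinarith [hm, hψl]
    have h3 : ⟪c, p⟫ + ψ p + L * ⟪gradient φ a, v⟫ - (⟪c, u⟫ + ψ u) ≤
        L * (φ (p + l • v) - φ (p + (0:ℝ) • v)) / l := by
      rw [le_div_iff₀ hl0]; linarith [hkey]
    have e2 : L * ((φ (p + l • v) - φ (p + (0:ℝ) • v)) / l) =
        L * (φ (p + l • v) - φ (p + (0:ℝ) • v)) / l := by ring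
    have e3 : L * ((φ (p + l • v) - φ (p + (0:ℝ) • v)) / l - ⟪gradient φ p, v⟫) =
        L * ((φ (p + l • v) - φ (p + (0:ℝ) • v)) / l) - L * ⟪gradient φ p, v⟫ := by ring
    linarith [h3]
  have hs2 : Tendsto (fun l : ℝ =>
      L * ((φ (p + l • v) - φ (p + (0:ℝ) • v)) / l - ⟪gradient φ p, v⟫))
      (𝓝[>] (0:ℝ)) (𝓝 0) := by
    have := hs.const_mul L
    simpa using this
  have hC : ⟪c, p⟫ + ψ p + L * ⟪gradient φ a, v⟫ - L * ⟪gradient φ p, v⟫ - (⟪c, u⟫ + ψ u) ≤ 0 :=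
    ge_of_tendsto hs2 key
  have h4 : ⟪gradient φ a, u - a⟫ = ⟪gradient φ a, p - a⟫ + ⟪gradient φ a, v⟫ := by
    rw [hv, ← inner_add_right]
    congr 1
    abel
  have hB : bregman φ u a = bregman φ p a + bregman φ u p + ⟪gradient φ p, v⟫
      - ⟪gradient φ a, v⟫ := by
    simp only [bregman, hv]
    rw [show ⟪gradient φ a, u - a⟫ = ⟪gradient φ a, p - a⟫ + ⟪gradient φ a, u - p⟫ from by
      rw [← inner_add_right]; congr 1; abel]
    ring
  have hB' : L * bregman φ u a = L * bregman φ p a + L * bregman φ u p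
      + L * ⟪gradient φ p, v⟫ - L * ⟪gradient φ a, v⟫ := by rw [hB]; ring
  linarith [hC, hB']

/-- linear convergence of the Bregman proximal gradient method under
relative smoothness and strong convexity: if `F` is `L`-smooth and `σ`-strongly convex
relative to `φ`, `x_*` minimizes `F + ψ`, and each iterate `x_{t+1}` minimizes
`⟨∇F(x_t), x⟩ + ψ(x) + L D_φ(x, x_t)`, then
`F(x_{t+1}) + ψ(x_{t+1}) − F(x_*) − ψ(x_*) ≤ (1 − σ/L)^{t+1} L D_φ(x_*, x_0)`. -/
theorem stmt7 {d : ℕ} (F φ ψ : EuclideanSpace ℝ (Fin d) → ℝ) (σ L : ℝ)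
    (hσ : 0 < σ) (hσL : σ ≤ L)
    (hF : Differentiable ℝ F) (hφ : Differentiable ℝ φ)
    (hφstrict : StrictConvexOn ℝ Set.univ φ)
    (hψ : ConvexOn ℝ Set.univ ψ)
    (hsmooth : ∀ x y, F x ≤ F y + ⟪gradient F y, x - y⟫ + L * bregman φ x y)
    (hsc : ∀ x y, F y + ⟪gradient F y, x - y⟫ + σ * bregman φ x y ≤ F x)
    (xstar : EuclideanSpace ℝ (Fin d))
    (hxstar : ∀ u, F xstar + ψ xstar ≤ F u + ψ u)
    (x : ℕ → EuclideanSpace ℝ (Fin d))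
    (hiter : ∀ t : ℕ, ∀ u,
      ⟪gradient F (x t), x (t + 1)⟫ + ψ (x (t + 1)) + L * bregman φ (x (t + 1)) (x t) ≤
        ⟪gradient F (x t), u⟫ + ψ u + L * bregman φ u (x t)) :
    ∀ t : ℕ,
      F (x (t + 1)) + ψ (x (t + 1)) - F xstar - ψ xstar ≤
        (1 - σ / L) ^ (t + 1) * L * bregman φ xstar (x 0) := by
  have hL : 0 < L := lt_of_lt_of_le hσ hσL
  have hrat : 0 ≤ 1 - σ / L := by
    rw [sub_nonneg, div_le_one hL]; exact hσL
  -- per-step inequality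
  have step : ∀ t : ℕ, F (x (t + 1)) + ψ (x (t + 1)) + L * bregman φ xstar (x (t + 1)) ≤
      F xstar + ψ xstar + (L - σ) * bregman φ xstar (x t) := by
    intro t
    have hs := hsmooth (x (t + 1)) (x t)
    have htp := three_point φ ψ L hL hφ hψ (gradient F (x t)) (x t) (x (t + 1))
      (hiter t) xstar
    have hc := hsc xstar (x t)
    rw [inner_sub_right] at hs hc
    linarith
  -- contraction of the divergence
  have Dbound : ∀ t : ℕ, bregman φ xstar (x t) ≤ (1 - σ / L) ^ t * bregman φ xstar (x 0) := by
    intro t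
    induction t with
    | zero => simp
    | succ t ih =>
      have h1 := step t
      have h2 := hxstar (x (t + 1))
      have h3 : L * bregman φ xstar (x (t + 1)) ≤ (L - σ) * bregman φ xstar (x t) := by
        linarith
      have h4 : bregman φ xstar (x (t + 1)) ≤ (1 - σ / L) * bregman φ xstar (x t) := by
        rw [← mul_le_mul_iff_right₀ hL]
        calc L * bregman φ xstar (x (t + 1)) ≤ (L - σ) * bregman φ xstar (x t) := h3
          _ = L * ((1 - σ / L) * bregman φ xstar (x t)) := by
            field_simp
      calc bregman φ xstar (x (t + 1)) ≤ (1 - σ / L) * bregman φ xstar (x t) := h4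
        _ ≤ (1 - σ / L) * ((1 - σ / L) ^ t * bregman φ xstar (x 0)) :=
          mul_le_mul_of_nonneg_left ih hrat
        _ = (1 - σ / L) ^ (t + 1) * bregman φ xstar (x 0) := by ring
  intro t
  have h1 := step t
  have h2 : 0 ≤ bregman φ xstar (x (t + 1)) :=
    bregman_nonneg hφstrict.convexOn hφ _ _
  have h3 : (L - σ) * bregman φ xstar (x t) ≤
      (L - σ) * ((1 - σ / L) ^ t * bregman φ xstar (x 0)) :=
    mul_le_mul_of_nonneg_left (Dbound t) (by linarith)
  have h4 : (L - σ) * ((1 - σ / L) ^ t * bregman φ xstar (x 0)) =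
      (1 - σ / L) ^ (t + 1) * L * bregman φ xstar (x 0) := by
    have : L - σ = (1 - σ / L) * L := by field_simp
    rw [this]; ring
  nlinarith [h1, h2, h3, mul_nonneg hL.le h2]
end

section
/- Let H and Ĥ be symmetric positive semidefinite d×d matrices, λ > 0, α ≥ 0, β > 0, t ≥ 0 with αt < 1. Write H_{α,β} = αH + βI. If −t·H_{α,β} ⪯ Ĥ − H ⪯ t·H_{α,β}, then with μ = t(β − αλ), H_F = H + λI and H_f = Ĥ + λI: (1 + αt + 2μ/λ)^{-1}(H_f + μI) ⪯ H_F ⪯ (1 − αt)^{-1}(H_f + μI), provided μ ≥ 0. -/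
private lemma psd_smul_nonneg {n : ℕ} {M : Matrix (Fin n) (Fin n) ℝ}
    (h : M.PosSemidef) {a : ℝ} (ha : 0 ≤ a) : (a • M).PosSemidef := by
  refine ⟨?_, fun x => ?_⟩
  · have h1 := h.1
    unfold Matrix.IsHermitian at h1 ⊢
    rw [Matrix.conjTranspose_smul, h1]
    simp
  · have h2 := h.2 x
    exact (h.smul ha).2 x

/-- from relative concentration to relative conditioning, Eq. (22):
if `−t H_{α,β} ⪯ Ĥ − H ⪯ t H_{α,β}` with `H_{α,β} = αH + βI`, then with
`μ = t(β − αλ) ≥ 0`, `H_F = H + λI`, `H_f = Ĥ + λI`: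
`(1 + αt + 2μ/λ)⁻¹ (H_f + μI) ⪯ H_F ⪯ (1 − αt)⁻¹ (H_f + μI)`. -/
theorem stmt11 {d : ℕ} (H Hhat : Matrix (Fin d) (Fin d) ℝ)
    (hH : H.PosSemidef) (hHhat : Hhat.PosSemidef)
    (lam α β t : ℝ) (hlam : 0 < lam) (hα : 0 ≤ α) (hβ : 0 < β) (ht : 0 ≤ t)
    (hαt : α * t < 1)
    (hupper : (t • (α • H + β • (1 : Matrix (Fin d) (Fin d) ℝ)) - (Hhat - H)).PosSemidef)
    (hlower : ((Hhat - H) + t • (α • H + β • (1 : Matrix (Fin d) (Fin d) ℝ))).PosSemidef)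
    (μ : ℝ) (hμ : μ = t * (β - α * lam)) (hμ0 : 0 ≤ μ) :
    ((H + lam • (1 : Matrix (Fin d) (Fin d) ℝ)) -
        (1 + α * t + 2 * μ / lam)⁻¹ •
          ((Hhat + lam • (1 : Matrix (Fin d) (Fin d) ℝ)) +
            μ • (1 : Matrix (Fin d) (Fin d) ℝ))).PosSemidef ∧
    ((1 - α * t)⁻¹ •
        ((Hhat + lam • (1 : Matrix (Fin d) (Fin d) ℝ)) +
          μ • (1 : Matrix (Fin d) (Fin d) ℝ)) -
      (H + lam • (1 : Matrix (Fin d) (Fin d) ℝ))).PosSemidef := by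
  have hαt0 : 0 ≤ α * t := mul_nonneg hα ht
  have hc1 : (0:ℝ) < 1 + α * t + 2 * μ / lam := by positivity
  have hc2 : (0:ℝ) < 1 - α * t := by linarith
  constructor
  · have key : (((2 * μ / lam) • H) +
        (t • (α • H + β • (1 : Matrix (Fin d) (Fin d) ℝ)) - (Hhat - H))).PosSemidef :=
      (psd_smul_nonneg hH (by positivity)).add hupper
    have := psd_smul_nonneg key (le_of_lt (inv_pos.mpr hc1))
    convert this using 1
    ext i j
    simp only [Matrix.sub_apply, Matrix.add_apply, Matrix.smul_apply, Matrix.one_apply,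
      smul_eq_mul]
    rcases eq_or_ne i j with h | h <;> simp [h] <;> subst hμ
    · linear_combination (-(H j j + lam)) * mul_inv_cancel₀ hc1.ne' +
        (2 * t * β - 2 * α * t * lam) * (1 + α * t + 2 * (t * (β - α * lam)) / lam)⁻¹ *
          mul_inv_cancel₀ hlam.ne'
    · linear_combination (-(H i j)) * mul_inv_cancel₀ hc1.ne'
  · have := psd_smul_nonneg hlower (le_of_lt (inv_pos.mpr hc2))
    convert this using 1
    ext i j
    simp only [Matrix.sub_apply, Matrix.add_apply, Matrix.smul_apply, Matrix.one_apply,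
      smul_eq_mul]
    rcases eq_or_ne i j with h | h <;> simp [h] <;> subst hμ <;> field_simp <;> ring
end

section
/- Let X be a nonnegative random variable with P(X ≥ y) ≤ 2r·exp(−y^{2/r}/2) for y ∈ [0, P] and P(X ≥ y) = 0 for y > P, where r ≥ 2 and P > 0. If 0 < c ≤ P^{2/r−1}/8, then E[e^{2cX}] ≤ 1 + 4cr·∫₀^∞ e^{−y^{2/r}/4} dy. -/
open MeasureTheory

/-- exponential moment bound in the chaining proof: if `X ≥ 0`,
`P(X ≥ y) ≤ 2r e^{−y^{2/r}/2}` for `y ∈ [0, P]`, `P(X ≥ y) = 0` for `y > P`,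
`r ≥ 2`, `P > 0` and `0 < c ≤ P^{2/r−1}/8`, then
`E[e^{2cX}] ≤ 1 + 4cr ∫₀^∞ e^{−y^{2/r}/4} dy`. -/
theorem stmt17 {Ω : Type*} [MeasurableSpace Ω] (μ : Measure Ω)
    [IsProbabilityMeasure μ] (X : Ω → ℝ) (hXmeas : Measurable X)
    (hXnn : ∀ ω, 0 ≤ X ω)
    (r P c : ℝ) (hr : 2 ≤ r) (hP : 0 < P)
    (hc : 0 < c) (hcP : c ≤ P ^ (2 / r - 1) / 8)
    (htail : ∀ y : ℝ, 0 ≤ y → y ≤ P →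
      μ {ω | y ≤ X ω} ≤ ENNReal.ofReal (2 * r * Real.exp (-(y ^ (2 / r)) / 2)))
    (htail' : ∀ y : ℝ, P < y → μ {ω | y ≤ X ω} = 0) :
    ∫ ω, Real.exp (2 * c * X ω) ∂μ ≤
      1 + 4 * c * r * ∫ y in Set.Ioi (0 : ℝ), Real.exp (-(y ^ (2 / r)) / 4) := by
  have hr0 : (0:ℝ) < r := by linarith
  have hq0 : (0:ℝ) < 2 / r := by positivity
  have hq1 : 2 / r ≤ 1 := by
    rw [div_le_one hr0]; linarith
  -- integrability of the comparison function
  have hint : IntegrableOn (fun y : ℝ => Real.exp (-(y ^ (2 / r)) / 4)) (Set.Ioi 0) := by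
    have hiff := integrableOn_Ioi_comp_rpow_iff'
      (fun y : ℝ => Real.exp (-(y ^ (2 / r)) / 4)) (p := r / 2) (by positivity)
    rw [← hiff]
    have h1 : IntegrableOn (fun x : ℝ => x ^ (r / 2 - 1) * Real.exp (-(1/4) * x ^ (1:ℝ)))
        (Set.Ioi 0) :=
      integrableOn_rpow_mul_exp_neg_mul_rpow (by linarith) one_pos (by norm_num)
    apply h1.congr_fun _ measurableSet_Ioi
    intro x hx
    have hx0 : (0:ℝ) < x := hx
    have hxx : (x ^ (r / 2)) ^ (2 / r) = x := by
      rw [← Real.rpow_mul hx0.le,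
        show r / 2 * (2 / r) = 1 by
          rw [div_mul_div_comm, div_eq_one_iff_eq (by positivity)]; ring,
        Real.rpow_one]
    simp only [smul_eq_mul, hxx, Real.rpow_one]
    ring_nf
  -- nonnegativity of the comparison integral
  have hI0 : 0 ≤ ∫ y in Set.Ioi (0:ℝ), Real.exp (-(y ^ (2 / r)) / 4) :=
    setIntegral_nonneg measurableSet_Ioi fun y _ => (Real.exp_pos _).le
  -- X ≤ P almost everywhere
  have hXP : ∀ᵐ ω ∂μ, X ω ≤ P := by
    have hnull : μ {ω | P < X ω} = 0 := by
      have hsub : {ω | P < X ω} ⊆ ⋃ n : ℕ, {ω | P + 1 / (n + 1) ≤ X ω} := by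
        intro ω hω
        have hω' : P < X ω := hω
        obtain ⟨n, hn⟩ := exists_nat_one_div_lt (sub_pos.mpr hω')
        refine Set.mem_iUnion.mpr ⟨n, ?_⟩
        show P + 1 / ((n:ℝ) + 1) ≤ X ω
        linarith
      refine measure_mono_null hsub (measure_iUnion_null fun n => ?_)
      refine htail' _ ?_
      have : (0:ℝ) < 1 / ((n:ℝ) + 1) := by positivity
      linarith
    filter_upwards [measure_eq_zero_iff_ae_notMem.mp hnull] with ω hω
    simpa using hω
  -- integrability of exp(2cX)
  have hInt : Integrable (fun ω => Real.exp (2 * c * X ω)) μ := by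
    refine Integrable.mono' (integrable_const (Real.exp (2 * c * P)))
      ((hXmeas.const_mul _).exp.aestronglyMeasurable) ?_
    filter_upwards [hXP] with ω hω
    rw [Real.norm_eq_abs, abs_of_pos (Real.exp_pos _)]
    exact Real.exp_le_exp.mpr (by nlinarith)
  -- reduce to the nonnegative part
  have key : ∫ ω, (Real.exp (2 * c * X ω) - 1) ∂μ ≤
      4 * c * r * ∫ y in Set.Ioi (0:ℝ), Real.exp (-(y ^ (2 / r)) / 4) := by
    have hnn : 0 ≤ᵐ[μ] fun ω => Real.exp (2 * c * X ω) - 1 := by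
      refine Filter.Eventually.of_forall fun ω => ?_
      have : (1:ℝ) ≤ Real.exp (2 * c * X ω) :=
        Real.one_le_exp (by have := hXnn ω; positivity)
      simp only [Pi.zero_apply]
      linarith
    have hmble : AEMeasurable X μ := hXmeas.aemeasurable
    -- layer cake with g t = 2c e^{2ct}
    set g : ℝ → ℝ := fun t => 2 * c * Real.exp (2 * c * t) with hg
    have hgc : Continuous g := by fun_prop
    have hgint : ∀ t > (0:ℝ), IntervalIntegrable g volume 0 t :=
      fun t _ => hgc.intervalIntegrable _ _
    have hgnn : ∀ᵐ t ∂(volume.restrict (Set.Ioi (0:ℝ))), 0 ≤ g t :=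
      Filter.Eventually.of_forall fun t => by positivity
    have hprim : ∀ x : ℝ, ∫ t in (0:ℝ)..x, g t = Real.exp (2 * c * x) - 1 := by
      intro x
      have hderiv : ∀ t ∈ Set.uIcc (0:ℝ) x,
          HasDerivAt (fun u => Real.exp (2 * c * u)) (g t) t := by
        intro t _
        have h := (Real.hasDerivAt_exp (2 * c * t)).comp t
          ((hasDerivAt_id t).const_mul (2 * c))
        have e : g t = Real.exp (2 * c * t) * (2 * c * 1) := by
          show 2 * c * Real.exp (2 * c * t) = Real.exp (2 * c * t) * (2 * c * 1); ring
        rw [e]; exact h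
      have := intervalIntegral.integral_eq_sub_of_hasDerivAt hderiv
        (hgc.intervalIntegrable _ _)
      rw [this]; simp
    have hlayer := lintegral_comp_eq_lintegral_meas_le_mul μ
      (Filter.Eventually.of_forall hXnn) hmble hgint hgnn
    have hlhs : ∫⁻ ω, ENNReal.ofReal (∫ t in (0:ℝ)..X ω, g t) ∂μ =
        ∫⁻ ω, ENNReal.ofReal (Real.exp (2 * c * X ω) - 1) ∂μ := by
      congr 1; funext ω; rw [hprim]
    -- pointwise bound on the tail integral
    have hbound : ∫⁻ t in Set.Ioi (0:ℝ), μ {a | t ≤ X a} * ENNReal.ofReal (g t) ≤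
        ∫⁻ t in Set.Ioi (0:ℝ),
          ENNReal.ofReal (4 * c * r * Real.exp (-(t ^ (2 / r)) / 4)) := by
      refine setLIntegral_mono' measurableSet_Ioi fun t ht => ?_
      have ht0 : (0:ℝ) < t := ht
      by_cases htP : t ≤ P
      · have h1 := htail t ht0.le htP
        calc μ {a | t ≤ X a} * ENNReal.ofReal (g t)
            ≤ ENNReal.ofReal (2 * r * Real.exp (-(t ^ (2 / r)) / 2)) *
              ENNReal.ofReal (g t) := by gcongr
          _ = ENNReal.ofReal (2 * r * Real.exp (-(t ^ (2 / r)) / 2) * g t) := by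
              rw [← ENNReal.ofReal_mul (by positivity)]
          _ ≤ ENNReal.ofReal (4 * c * r * Real.exp (-(t ^ (2 / r)) / 4)) := by
              apply ENNReal.ofReal_le_ofReal
              have hexp : 2 * r * Real.exp (-(t ^ (2 / r)) / 2) * g t =
                  4 * c * r * Real.exp (-(t ^ (2 / r)) / 2 + 2 * c * t) := by
                rw [Real.exp_add, hg]; ring
              rw [hexp]
              have hkey : 2 * c * t ≤ t ^ (2 / r) / 4 := by
                have hPt : P ^ (2 / r - 1) ≤ t ^ (2 / r - 1) :=
                  Real.rpow_le_rpow_of_nonpos ht0 htP (by linarith)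
                have htq : t ^ (2 / r - 1) * t = t ^ (2 / r) := by
                  rw [← Real.rpow_add_one ht0.ne']
                  ring_nf
                nlinarith [Real.rpow_pos_of_pos ht0 (2 / r - 1)]
              gcongr
              linarith
      · push_neg at htP
        rw [htail' t htP, zero_mul]
        exact zero_le
    -- compare with the real integral
    have hofReal : ∫⁻ t in Set.Ioi (0:ℝ),
        ENNReal.ofReal (4 * c * r * Real.exp (-(t ^ (2 / r)) / 4)) =
        ENNReal.ofReal (∫ t in Set.Ioi (0:ℝ), 4 * c * r * Real.exp (-(t ^ (2 / r)) / 4)) := by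
      rw [← ofReal_integral_eq_lintegral_ofReal (hint.const_mul _)
        (Filter.Eventually.of_forall fun t => by positivity)]
    have hmul : ∫ t in Set.Ioi (0:ℝ), 4 * c * r * Real.exp (-(t ^ (2 / r)) / 4) =
        4 * c * r * ∫ y in Set.Ioi (0:ℝ), Real.exp (-(y ^ (2 / r)) / 4) :=
      integral_const_mul _ _
    rw [integral_eq_lintegral_of_nonneg_ae hnn
      (((hXmeas.const_mul _).exp.sub measurable_const).aestronglyMeasurable)]
    refine ENNReal.toReal_le_of_le_ofReal (by positivity) ?_
    rw [← hlhs, hlayer]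
    rw [← hmul]
    exact hbound.trans_eq hofReal
  have hsplit : ∫ ω, Real.exp (2 * c * X ω) ∂μ =
      (∫ ω, (Real.exp (2 * c * X ω) - 1) ∂μ) + 1 := by
    rw [integral_sub hInt (integrable_const 1)]
    simp
  rw [hsplit]
  linarith
end
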